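/- For every β > 0, the sum over all (m,n,p) ∈ ℤ³ of (4n² + 4np − p²)·exp(−β·(m² + n² + p² + mp + np)) equals 0. -/

import Mathlib

open Real

lemma aux_sum1 {c : ℝ} (hc : 0 < c) :
    Summable fun x : ℤ => (1 + (x:ℝ)^2) * Real.exp (-c * (x:ℝ)^2) := by
  have hnat : Summable fun n : ℕ => (1 + (n:ℝ)^2) * Real.exp (-c * (n:ℝ)^2) := by
    have h0 := Real.summable_pow_mul_exp_neg_nat_mul 0 hc
    have h2 := Real.summable_pow_mul_exp_neg_nat_mul 2 hc
    refine Summable.of_nonneg_of_le (fun n => by positivity) (fun n => ?_) (h0.add h2)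
    have hle : Real.exp (-c * (n:ℝ)^2) ≤ Real.exp (-c * n) := by
      apply Real.exp_le_exp.mpr
      have h : (n:ℝ) ≤ (n:ℝ)^2 := by
        exact_mod_cast Nat.le_self_pow two_ne_zero n
      nlinarith [h, hc]
    have h1 : (0:ℝ) ≤ 1 + (n:ℝ)^2 := by positivity
    calc (1 + (n:ℝ)^2) * Real.exp (-c * (n:ℝ)^2)
        ≤ (1 + (n:ℝ)^2) * Real.exp (-c * n) := by
          exact mul_le_mul_of_nonneg_left hle h1
      _ = (n:ℝ)^0 * Real.exp (-c * n) + (n:ℝ)^2 * Real.exp (-c * n) := by ring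
  apply Summable.of_nat_of_neg <;> simpa using hnat

def eA : (ℤ × ℤ × ℤ) ≃ (ℤ × ℤ × ℤ) where
  toFun v := (-v.1 - v.2.2, -v.1, v.1 - v.2.1)
  invFun v := (-v.2.1, -v.2.1 - v.2.2, -v.1 + v.2.1)
  left_inv v := by obtain ⟨m, n, p⟩ := v; simp [Prod.ext_iff]; try omega
  right_inv v := by obtain ⟨m, n, p⟩ := v; simp [Prod.ext_iff]; try omega

def eB : (ℤ × ℤ × ℤ) ≃ (ℤ × ℤ × ℤ) where
  toFun v := (-v.1 - v.2.2, -v.1, v.1 + v.2.1 + v.2.2)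
  invFun v := (-v.2.1, v.1 + v.2.2, -v.1 + v.2.1)
  left_inv v := by obtain ⟨m, n, p⟩ := v; simp [Prod.ext_iff]; try omega
  right_inv v := by obtain ⟨m, n, p⟩ := v; simp [Prod.ext_iff]; try omega

def eC : (ℤ × ℤ × ℤ) ≃ (ℤ × ℤ × ℤ) where
  toFun v := (-v.1, -v.1 - v.2.2, v.1 - v.2.1)
  invFun v := (-v.1, -v.1 - v.2.2, v.1 - v.2.1)
  left_inv v := by obtain ⟨m, n, p⟩ := v; simp [Prod.ext_iff]; try omega
  right_inv v := by obtain ⟨m, n, p⟩ := v; simp [Prod.ext_iff]; try omega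

def eD : (ℤ × ℤ × ℤ) ≃ (ℤ × ℤ × ℤ) where
  toFun v := (-v.1, -v.1 - v.2.2, v.1 + v.2.1 + v.2.2)
  invFun v := (-v.1, v.2.1 + v.2.2, v.1 - v.2.1)
  left_inv v := by obtain ⟨m, n, p⟩ := v; simp [Prod.ext_iff]; try omega
  right_inv v := by obtain ⟨m, n, p⟩ := v; simp [Prod.ext_iff]; try omega

def eE : (ℤ × ℤ × ℤ) ≃ (ℤ × ℤ × ℤ) where
  toFun v := (-v.2.1 - v.2.2, -v.1 - v.2.2, v.2.2)
  invFun v := (-v.2.1 - v.2.2, -v.1 - v.2.2, v.2.2)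
  left_inv v := by obtain ⟨m, n, p⟩ := v; simp [Prod.ext_iff]; try omega
  right_inv v := by obtain ⟨m, n, p⟩ := v; simp [Prod.ext_iff]; try omega

set_option maxHeartbeats 1000000 in
theorem stmt3 (β : ℝ) (hβ : 0 < β) :
    ∑' v : ℤ × ℤ × ℤ,
      ((4 * (v.2.1:ℝ)^2 + 4 * v.2.1 * v.2.2 - (v.2.2:ℝ)^2) *
        Real.exp (-β * ((v.1:ℝ)^2 + (v.2.1:ℝ)^2 + (v.2.2:ℝ)^2
          + v.1 * v.2.2 + v.2.1 * v.2.2))) = 0 := by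
  set f : ℤ × ℤ × ℤ → ℝ := fun v =>
      ((4 * (v.2.1:ℝ)^2 + 4 * v.2.1 * v.2.2 - (v.2.2:ℝ)^2) *
        Real.exp (-β * ((v.1:ℝ)^2 + (v.2.1:ℝ)^2 + (v.2.2:ℝ)^2
          + v.1 * v.2.2 + v.2.1 * v.2.2))) with hfdef
  have hc : 0 < β / 4 := by linarith
  -- summability
  have hin : Summable fun q : ℤ × ℤ =>
      ((1 + (q.1:ℝ)^2) * Real.exp (-(β/4) * (q.1:ℝ)^2)) *
      ((1 + (q.2:ℝ)^2) * Real.exp (-(β/4) * (q.2:ℝ)^2)) :=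
    Summable.mul_of_nonneg (aux_sum1 hc) (aux_sum1 hc)
      (fun x => by positivity) (fun x => by positivity)
  have hg : Summable fun v : ℤ × ℤ × ℤ =>
      (6 * ((1 + (v.1:ℝ)^2) * Real.exp (-(β/4) * (v.1:ℝ)^2))) *
      (((1 + (v.2.1:ℝ)^2) * Real.exp (-(β/4) * (v.2.1:ℝ)^2)) *
       ((1 + (v.2.2:ℝ)^2) * Real.exp (-(β/4) * (v.2.2:ℝ)^2))) :=
    Summable.mul_of_nonneg ((aux_sum1 hc).mul_left 6) hin
      (fun x => by positivity) (fun x => by positivity)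
  have hf : Summable f := by
    apply Summable.of_norm_bounded hg
    rintro ⟨m, n, p⟩
    simp only [hfdef, Real.norm_eq_abs]
    have hE : Real.exp (-β * ((m:ℝ)^2 + (n:ℝ)^2 + (p:ℝ)^2 + m * p + n * p)) ≤
        Real.exp (-(β/4) * (m:ℝ)^2) * (Real.exp (-(β/4) * (n:ℝ)^2) *
          Real.exp (-(β/4) * (p:ℝ)^2)) := by
      rw [← Real.exp_add, ← Real.exp_add]
      apply Real.exp_le_exp.mpr
      have hq : (0:ℝ) ≤ 3*(m:ℝ)^2 + 3*(n:ℝ)^2 + 3*(p:ℝ)^2 + 4*m*p + 4*n*p := by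
        nlinarith [sq_nonneg (3*(m:ℝ) + 2*p), sq_nonneg (3*(n:ℝ) + 2*p), sq_nonneg (p:ℝ)]
      nlinarith [mul_nonneg hβ.le hq]
    have hw : |4 * (n:ℝ)^2 + 4 * n * p - (p:ℝ)^2| ≤
        6 * (1 + (m:ℝ)^2) * ((1 + (n:ℝ)^2) * (1 + (p:ℝ)^2)) := by
      rw [abs_le]
      constructor
      · nlinarith [sq_nonneg ((n:ℝ) + p), sq_nonneg ((n:ℝ) - p), sq_nonneg ((n:ℝ)*p),
          sq_nonneg (m:ℝ), sq_nonneg (n:ℝ), sq_nonneg (p:ℝ), sq_nonneg ((m:ℝ)*n),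
          sq_nonneg ((m:ℝ)*p), sq_nonneg ((m:ℝ)*n*p)]
      · nlinarith [sq_nonneg ((n:ℝ) + p), sq_nonneg ((n:ℝ) - p), sq_nonneg ((n:ℝ)*p),
          sq_nonneg (m:ℝ), sq_nonneg (n:ℝ), sq_nonneg (p:ℝ), sq_nonneg ((m:ℝ)*n),
          sq_nonneg ((m:ℝ)*p), sq_nonneg ((m:ℝ)*n*p)]
    calc |(4 * (n:ℝ)^2 + 4 * n * p - (p:ℝ)^2) *
            Real.exp (-β * ((m:ℝ)^2 + (n:ℝ)^2 + (p:ℝ)^2 + m * p + n * p))|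
        = |4 * (n:ℝ)^2 + 4 * n * p - (p:ℝ)^2| *
            Real.exp (-β * ((m:ℝ)^2 + (n:ℝ)^2 + (p:ℝ)^2 + m * p + n * p)) := by
          rw [abs_mul, abs_of_pos (Real.exp_pos _)]
      _ ≤ (6 * (1 + (m:ℝ)^2) * ((1 + (n:ℝ)^2) * (1 + (p:ℝ)^2))) *
            (Real.exp (-(β/4) * (m:ℝ)^2) * (Real.exp (-(β/4) * (n:ℝ)^2) *
             Real.exp (-(β/4) * (p:ℝ)^2))) := by
          apply mul_le_mul hw hE (Real.exp_pos _).le (by positivity)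
      _ = (6 * ((1 + (m:ℝ)^2) * Real.exp (-(β/4) * (m:ℝ)^2))) *
          (((1 + (n:ℝ)^2) * Real.exp (-(β/4) * (n:ℝ)^2)) *
           ((1 + (p:ℝ)^2) * Real.exp (-(β/4) * (p:ℝ)^2))) := by ring
  -- pointwise vanishing of the symmetrized weight
  have key : ∀ v : ℤ × ℤ × ℤ,
      f (eA v) + (f (eB v) + (f v + (f (eC v) + (f (eD v) + f (eE v))))) = 0 := by
    rintro ⟨m, n, p⟩
    simp only [hfdef, eA, eB, eC, eD, eE, Equiv.coe_fn_mk]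
    push_cast
    ring_nf
  -- summability of each composed term
  have sA : Summable fun v => f (eA v) := hf.comp_injective eA.injective
  have sB : Summable fun v => f (eB v) := hf.comp_injective eB.injective
  have sC : Summable fun v => f (eC v) := hf.comp_injective eC.injective
  have sD : Summable fun v => f (eD v) := hf.comp_injective eD.injective
  have sE : Summable fun v => f (eE v) := hf.comp_injective eE.injective
  have H0 : ∑' v : ℤ × ℤ × ℤ,
      (f (eA v) + (f (eB v) + (f v + (f (eC v) + (f (eD v) + f (eE v)))))) = 0 := by
    simp only [key, tsum_zero]
  rw [Summable.tsum_add sA (sB.add (hf.add (sC.add (sD.add sE)))),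
      Summable.tsum_add sB (hf.add (sC.add (sD.add sE))),
      Summable.tsum_add hf (sC.add (sD.add sE)),
      Summable.tsum_add sC (sD.add sE),
      Summable.tsum_add sD sE,
      eA.tsum_eq f, eB.tsum_eq f, eC.tsum_eq f, eD.tsum_eq f, eE.tsum_eq f] at H0
  linarith [H0]
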